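/- arXiv:1109.5347 — 3 statements merged into one kernel-verified Lean document; each statement's English description precedes it below -/
import Mathlib

section
/- Let B be a C*-algebra and u ∈ B a selfadjoint partial isometry, written u = p - q with p, q mutually orthogonal projections. Suppose that every norm-one functional f on B with f(u) = 1 is a state (i.e. positive with f(1)=1 after unitization). Then q = 0, so u is a projection. -/
open scoped ComplexOrder

/-- If `u = p - q` is a selfadjoint partial isometry in a unital C*-algebra `B`, with `p, q`
mutually orthogonal projections, and every norm-one functional `f` with `f(u) = 1` is a
state (positive with `f(1) = 1`), then `q = 0` and `u` is a projection. -/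
theorem stmt7 {B : Type*} [NormedRing B] [StarRing B] [CStarRing B] [NormOneClass B]
    [NormedAlgebra ℂ B] [StarModule ℂ B] [CompleteSpace B]
    [PartialOrder B] [StarOrderedRing B]
    (u p q : B) (hp : IsIdempotentElem p) (hpsa : IsSelfAdjoint p)
    (hq : IsIdempotentElem q) (hqsa : IsSelfAdjoint q)
    (hpq : p * q = 0) (hqp : q * p = 0) (hu : u = p - q)
    (hstates : ∀ f : B →L[ℂ] ℂ, ‖f‖ = 1 → f u = 1 →
      (f 1 = 1 ∧ ∀ b : B, 0 ≤ b → 0 ≤ f b)) :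
    q = 0 := by
  letI : CStarAlgebra B := {}
  by_contra hq0
  have hqnorm : ‖q‖ = 1 := by
    have h1 : ‖q‖ * ‖q‖ = ‖q‖ := by
      rw [← CStarRing.norm_star_mul_self (x := q), hqsa.star_eq, hq.eq]
    have h2 : ‖q‖ ≠ 0 := norm_ne_zero_iff.mpr hq0
    field_simp at h1
    exact h1
  have hqpos : (0:B) ≤ q := by
    have := star_mul_self_nonneg q; rwa [hqsa.star_eq, hq.eq] at this
  -- p + q is a projection, hence ≤ 1
  have hsum : IsIdempotentElem (p + q) := by
    unfold IsIdempotentElem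
    rw [add_mul, mul_add, mul_add, hp.eq, hq.eq, hpq, hqp]
    abel
  have hsumsa : IsSelfAdjoint (p + q) := hpsa.add hqsa
  have hpq1 : p + q ≤ 1 := by
    have hidem : IsIdempotentElem (1 - (p + q)) := hsum.one_sub
    have hsa : IsSelfAdjoint (1 - (p + q)) := (IsSelfAdjoint.one B).sub hsumsa
    have h0 : (0:B) ≤ 1 - (p + q) := by
      have := star_mul_self_nonneg (1 - (p + q))
      rwa [hsa.star_eq, hidem.eq] at this
    exact sub_nonneg.mp h0
  -- nonneg real multiples of p
  have hsmul : ∀ r : ℝ, 0 ≤ r → (0:B) ≤ r • p := by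
    intro r hr
    have : r • p = star (Real.sqrt r • p) * (Real.sqrt r • p) := by
      rw [star_smul, hpsa.star_eq, smul_mul_smul_comm, hp.eq, star_trivial,
        Real.mul_self_sqrt hr]
    rw [this]
    exact star_mul_self_nonneg _
  -- key norm bound
  have key : ∀ t : ℂ, ‖t‖ ≤ 1 → ‖q + t • p‖ ≤ 1 := by
    intro t ht
    have hsq : ‖q + t • p‖ * ‖q + t • p‖ = ‖q + (‖t‖^2 : ℝ) • p‖ := by
      rw [← CStarRing.norm_star_mul_self (x := q + t • p)]
      congr 1
      rw [star_add, star_smul, hqsa.star_eq, hpsa.star_eq]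
      rw [add_mul, mul_add, mul_add, hq.eq, mul_smul_comm, smul_mul_assoc,
        smul_mul_smul_comm, hp.eq, hqp, hpq, smul_zero, smul_zero]
      have : (starRingEnd ℂ t) * t = ((‖t‖^2 : ℝ) : ℂ) := by
        rw [mul_comm, Complex.mul_conj']
        norm_cast
      rw [Complex.star_def, this, Complex.coe_smul]
      abel
    have hle : q + (‖t‖^2 : ℝ) • p ≤ 1 := by
      have h1 : (‖t‖^2 : ℝ) • p ≤ p := by
        have := hsmul (1 - ‖t‖^2) (by nlinarith [norm_nonneg t])
        have h2 : (1 - ‖t‖^2 : ℝ) • p = p - (‖t‖^2 : ℝ) • p := by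
          rw [sub_smul, one_smul]
        rw [h2] at this
        exact sub_nonneg.mp this
      calc q + (‖t‖^2 : ℝ) • p ≤ q + p := by exact add_le_add_right h1 q
        _ = p + q := by abel
        _ ≤ 1 := hpq1
    have hpos : (0:B) ≤ q + (‖t‖^2 : ℝ) • p :=
      add_nonneg hqpos (hsmul _ (by positivity))
    have hnorm1 : ‖q + (‖t‖^2 : ℝ) • p‖ ≤ 1 :=
      (CStarAlgebra.norm_le_one_iff_of_nonneg _ hpos).mpr hle
    nlinarith [norm_nonneg (q + t • p)]
  -- get a norm-one functional attaining norm at q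
  obtain ⟨g, hg1, hgq⟩ := exists_dual_vector ℂ q (norm_ne_zero_iff.mpr hq0)
  rw [hqnorm] at hgq
  push_cast at hgq
  -- g p = 0
  have hgp : g p = 0 := by
    by_contra hc0
    set c := g p with hc
    have hnc : (0:ℝ) < ‖c‖ := norm_pos_iff.mpr hc0
    set t : ℂ := (starRingEnd ℂ c) / ‖c‖ with hts
    have ht : ‖t‖ ≤ 1 := by
      rw [hts, norm_div, RCLike.norm_conj, Complex.norm_real, Real.norm_eq_abs, abs_of_nonneg hnc.le]
      exact div_self_le_one _
    have hbound := key t ht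
    have htc : t * c = (‖c‖ : ℂ) := by
      have h1 : (starRingEnd ℂ c) * c = (‖c‖:ℂ) * (‖c‖:ℂ) := by
        rw [mul_comm, Complex.mul_conj']
        push_cast
        ring
      rw [hts, div_mul_eq_mul_div, h1, mul_div_assoc,
        div_self (Complex.ofReal_ne_zero.mpr hnc.ne'), mul_one]
    have hval : g (q + t • p) = 1 + (‖c‖ : ℂ) := by
      rw [map_add, map_smul, hgq, smul_eq_mul, ← hc, htc]
    have hgle : ‖g (q + t • p)‖ ≤ 1 := by
      calc ‖g (q + t • p)‖ ≤ ‖g‖ * ‖q + t • p‖ := g.le_opNorm _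
        _ ≤ 1 := by rw [hg1, one_mul]; exact hbound
    rw [hval] at hgle
    have : ‖(1 + (‖c‖ : ℂ) : ℂ)‖ = 1 + ‖c‖ := by
      rw [← Complex.ofReal_one, ← Complex.ofReal_add, Complex.norm_real,
        Real.norm_eq_abs, abs_of_nonneg (by linarith)]
    rw [this] at hgle
    linarith
  -- apply the state hypothesis to -g
  have hfu : (-g) u = 1 := by
    rw [hu]; simp [map_sub, hgp, hgq]
  have hfn : ‖(-g)‖ = 1 := by rw [norm_neg, hg1]
  obtain ⟨-, hfpos⟩ := hstates (-g) hfn hfu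
  have := hfpos q hqpos
  simp only [ContinuousLinearMap.neg_apply, hgq] at this
  rw [Complex.le_def] at this
  simp at this
  try linarith
end

section
/- Let A be a unital operator algebra inside a C*-algebra B, and let p ∈ A be a projection. Then the set [p]_A = {a ∈ A : ‖1 - 2a‖ ≤ 1 and ap = a} is a face of the convex set (1/2)𝔉_A = {a ∈ A : ‖1 - 2a‖ ≤ 1}: if x, y ∈ (1/2)𝔉_A and (x+y)/2 ∈ [p]_A, then x, y ∈ [p]_A. -/
section aux
variable {B : Type*} [CStarAlgebra B] [PartialOrder B] [StarOrderedRing B]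

lemma aux_re_nonneg (z : B) (hz : ‖(1 : B) - 2 • z‖ ≤ 1) :
    ((star z * z + star z * z) + (star z * z + star z * z))
      ≤ (z + star z) + (z + star z) := by
  set a : B := 1 - 2 • z with ha
  have h1 : star a * a ≤ 1 := by
    rw [← CStarAlgebra.norm_le_one_iff_of_nonneg _ (star_mul_self_nonneg a)]
    calc ‖star a * a‖ ≤ ‖star a‖ * ‖a‖ := norm_mul_le _ _
      _ ≤ 1 * 1 := by
          rw [norm_star]
          exact mul_le_mul hz hz (norm_nonneg _) zero_le_one
      _ = 1 := one_mul 1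
  have hexp : star a * a
      = 1 - (((z + star z) + (z + star z)) - ((star z * z + star z * z) + (star z * z + star z * z))) := by
    simp only [ha, two_smul, star_sub, star_add, star_one]
    noncomm_ring
  rw [hexp, sub_le_self_iff, sub_nonneg] at h1
  exact h1

lemma aux_kill (z : B) (hz : ‖(1 : B) - 2 • z‖ ≤ 1)
    (q : B) (hq : IsSelfAdjoint q)
    (hzq : q * ((z + star z) + (z + star z)) * q = 0) : z * q = 0 := by
  have hle := star_left_conjugate_le_conjugate (aux_re_nonneg z hz) q
  rw [hq.star_eq, hzq] at hle
  set s : B := q * (star z * z) * q with hs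
  have hs0 : 0 ≤ s := by
    have := star_left_conjugate_nonneg (star_mul_self_nonneg z) q
    rwa [hq.star_eq] at this
  have hsum : q * ((star z * z + star z * z) + (star z * z + star z * z)) * q
      = (s + s) + (s + s) := by
    simp only [hs, mul_add, add_mul]
  rw [hsum] at hle
  have hzero : s = 0 := by
    refine le_antisymm ?_ hs0
    calc s = s + 0 := (add_zero s).symm
      _ ≤ s + (s + (s + s)) := add_le_add_right (add_nonneg hs0 (add_nonneg hs0 hs0)) s
      _ = (s + s) + (s + s) := by abel
      _ ≤ 0 := hle
  have : star (z * q) * (z * q) = 0 := by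
    rw [star_mul, hq.star_eq, hs] at *
    calc q * star z * (z * q) = q * (star z * z) * q := by noncomm_ring
      _ = 0 := hzero
  rwa [CStarRing.star_mul_self_eq_zero_iff] at this

end aux

/-- For a projection `p` in a unital operator algebra `A ⊆ B`, the set
`[p]_A = {a ∈ A : ‖1 - 2a‖ ≤ 1, ap = a}` is a face of `(1/2)𝔉_A`: if `x, y ∈ (1/2)𝔉_A`
and their midpoint lies in `[p]_A`, then `x, y ∈ [p]_A`. -/
theorem stmt9 {B : Type*} [NormedRing B] [StarRing B] [CStarRing B] [NormOneClass B]
    [NormedAlgebra ℂ B] [StarModule ℂ B] [CompleteSpace B]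
    (A : Subalgebra ℂ B) (hA : IsClosed (A : Set B))
    (p : B) (hp : IsIdempotentElem p) (hpsa : IsSelfAdjoint p) (hpA : p ∈ A)
    (x y : B) (hxA : x ∈ A) (hyA : y ∈ A)
    (hx : ‖(1 : B) - 2 • x‖ ≤ 1) (hy : ‖(1 : B) - 2 • y‖ ≤ 1)
    (hmid : ((2 : ℂ)⁻¹ • (x + y)) * p = (2 : ℂ)⁻¹ • (x + y)) :
    x * p = x ∧ y * p = y := by
  letI : CStarAlgebra B := {}
  letI := CStarAlgebra.spectralOrder B
  haveI := CStarAlgebra.spectralOrderedRing B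
  set q : B := 1 - p with hqdef
  have hq : IsSelfAdjoint q := by
    rw [hqdef, IsSelfAdjoint, star_sub, star_one, hpsa.star_eq]
  -- midpoint condition : (x + y) * q = 0
  have hsum : (x + y) * p = x + y := by
    have := hmid
    rw [smul_mul_assoc] at this
    exact smul_right_injective B (by norm_num : (2 : ℂ)⁻¹ ≠ 0) this
  have hq0 : (x + y) * q = 0 := by
    rw [hqdef, mul_sub, hsum, mul_one, sub_self]
  have hstar0 : q * (star x + star y) = 0 := by
    have := congrArg star hq0
    rwa [star_mul, hq.star_eq, star_add, star_zero] at this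
  -- the two conjugated real parts sum to zero
  have habx : 0 ≤ q * ((x + star x) + (x + star x)) * q := by
    have h := star_left_conjugate_nonneg
      (le_trans (add_nonneg (add_nonneg (star_mul_self_nonneg x) (star_mul_self_nonneg x))
        (add_nonneg (star_mul_self_nonneg x) (star_mul_self_nonneg x))) (aux_re_nonneg x hx)) q
    rwa [hq.star_eq] at h
  have haby : 0 ≤ q * ((y + star y) + (y + star y)) * q := by
    have h := star_left_conjugate_nonneg
      (le_trans (add_nonneg (add_nonneg (star_mul_self_nonneg y) (star_mul_self_nonneg y))
        (add_nonneg (star_mul_self_nonneg y) (star_mul_self_nonneg y))) (aux_re_nonneg y hy)) q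
    rwa [hq.star_eq] at h
  have hsum0 : q * ((x + star x) + (x + star x)) * q
      + q * ((y + star y) + (y + star y)) * q = 0 := by
    have e : q * ((x + star x) + (x + star x)) * q
        + q * ((y + star y) + (y + star y)) * q
        = (q * ((x + y) * q) + q * ((x + y) * q))
          + ((q * (star x + star y)) * q + (q * (star x + star y)) * q) := by
      noncomm_ring
    rw [e, hq0, hstar0]
    simp
  have hxq0 : q * ((x + star x) + (x + star x)) * q = 0 := by
    refine le_antisymm ?_ habx
    calc q * ((x + star x) + (x + star x)) * q
        = q * ((x + star x) + (x + star x)) * q + 0 := (add_zero _).symm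
      _ ≤ q * ((x + star x) + (x + star x)) * q
          + q * ((y + star y) + (y + star y)) * q := add_le_add_right haby _
      _ = 0 := hsum0
  have hyq0 : q * ((y + star y) + (y + star y)) * q = 0 := by
    refine le_antisymm ?_ haby
    calc q * ((y + star y) + (y + star y)) * q
        = 0 + q * ((y + star y) + (y + star y)) * q := (zero_add _).symm
      _ ≤ q * ((x + star x) + (x + star x)) * q
          + q * ((y + star y) + (y + star y)) * q := add_le_add_left habx _
      _ = 0 := hsum0
  have hx0 := aux_kill x hx q hq hxq0
  have hy0 := aux_kill y hy q hq hyq0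
  constructor
  · have := hx0
    rw [hqdef, mul_sub, mul_one, sub_eq_zero] at this
    exact this.symm
  · have := hy0
    rw [hqdef, mul_sub, mul_one, sub_eq_zero] at this
    exact this.symm
end

section
/- Let A be a unital operator algebra inside a C*-algebra B, and let p, q ∈ A be projections. Then [p,q]_A = {a ∈ A : ‖1 - 2a‖ ≤ 1, aq = q, ap = a} is a face of (1/2)𝔉_A = {a ∈ A : ‖1 - 2a‖ ≤ 1}: if x, y ∈ (1/2)𝔉_A with (x+y)/2 ∈ [p,q]_A, then x, y ∈ [p,q]_A. -/
section Aux

variable {B : Type*} [CStarAlgebra B] [PartialOrder B] [StarOrderedRing B]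

private lemma aux_le_one_of_norm_le_one {z : B} (hz : ‖z‖ ≤ 1) : star z * z ≤ 1 := by
  refine (CStarAlgebra.norm_le_one_iff_of_nonneg (star z * z) (star_mul_self_nonneg z)).mp ?_
  rw [CStarRing.norm_star_mul_self]
  nlinarith [norm_nonneg z]

/-- If `q*c*q = -q` with `‖c‖ ≤ 1` and `q` a selfadjoint idempotent, then `c*q = -q`. -/
private lemma aux_corner {q c : B} (hq : q * q = q) (hqsa : star q = q)
    (hc : ‖c‖ ≤ 1) (hqcq : q * c * q = -q) : c * q = -q := by
  have h1 : star c * c ≤ 1 := aux_le_one_of_norm_le_one hc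
  obtain ⟨a, ha⟩ : ∃ a : B, a = c * q := ⟨_, rfl⟩
  have h7 : q * a = -q := by rw [ha, ← mul_assoc, hqcq]
  have h6 : star a * q = -q := by
    have e := congrArg star h7
    rw [star_mul, hqsa, star_neg, hqsa] at e
    exact e
  have h5 : star a * a ≤ q := by
    have h := star_left_conjugate_le_conjugate h1 q
    rw [hqsa, mul_one, hq] at h
    have e : star a * a = q * (star c * c) * q := by
      rw [ha, star_mul, hqsa]; simp only [mul_assoc]
    rw [e]; exact h
  have hrr : star (a + q) * (a + q) ≤ 0 := by
    have e : star (a + q) * (a + q) = star a * a + (star a * q + (q * a + q * q)) := by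
      simp only [star_add, hqsa, add_mul, mul_add]; abel
    rw [e, h6, h7, hq]
    have e2 : star a * a + (-q + (-q + q)) = star a * a - q := by abel
    rw [e2]
    exact sub_nonpos.mpr h5
  have hz : a + q = 0 := by
    have h0 : star (a + q) * (a + q) = 0 :=
      le_antisymm hrr (star_mul_self_nonneg _)
    exact (CStarRing.star_mul_self_eq_zero_iff _).mp h0
  rw [← ha]
  exact eq_neg_of_add_eq_zero_left hz

/-- Key lemma: if `‖1-2x‖ ≤ 1`, `‖1-2y‖ ≤ 1` and `(x+y)*q = 2q` with `q` a selfadjoint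
idempotent, then `x*q = q`. -/
private lemma aux_key {q x y : B} (hq : q * q = q) (hqsa : star q = q)
    (hx : ‖(1 : B) - 2 • x‖ ≤ 1) (hy : ‖(1 : B) - 2 • y‖ ≤ 1)
    (hmid : (x + y) * q = 2 • q) : x * q = q := by
  have hq' : ∀ t : B, q * (q * t) = q * t := fun t => by rw [← mul_assoc, hq]
  obtain ⟨c, hcdef⟩ : ∃ c : B, c = 1 - 2 • x := ⟨_, rfl⟩
  obtain ⟨d, hddef⟩ : ∃ d : B, d = 1 - 2 • y := ⟨_, rfl⟩
  rw [← hcdef] at hx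
  rw [← hddef] at hy
  have hqn : ‖q‖ ≤ 1 := by
    have h : ‖q‖ * ‖q‖ = ‖q‖ := by
      rw [← CStarRing.norm_star_mul_self (x := q), hqsa, hq]
    nlinarith [norm_nonneg q]
  have hcd : c * q + d * q = -(2 • q) := by
    have e : c * q + d * q = 2 • q - 2 • ((x + y) * q) := by
      rw [hcdef, hddef, add_mul, smul_add, sub_mul, sub_mul, one_mul,
        smul_mul_assoc, smul_mul_assoc]
      abel
    rw [e, hmid]
    abel
  obtain ⟨u, hudef⟩ : ∃ u : B, u = q * c * q + q := ⟨_, rfl⟩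
  have hqcq : q * c * q = u - q := by rw [hudef]; abel
  have hqdq : q * d * q = -q - u := by
    have h : q * (c * q) + q * (d * q) = -(2 • q) := by
      rw [← mul_add, hcd, mul_neg, mul_smul_comm, hq]
    rw [← mul_assoc, ← mul_assoc, hqcq] at h
    have e : q * d * q = -(2 • q) - (u - q) := by rw [← h]; abel
    rw [e]; abel
  -- corner algebra facts for u
  have huq : u * q = u := by
    rw [hudef, add_mul, hq, mul_assoc, hq]
  have hqu : q * u = u := by
    rw [hudef, mul_add, hq]
    simp only [mul_assoc, hq']
  have hus : star u = q * star c * q + q := by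
    simp only [hudef, star_add, star_mul, hqsa, mul_assoc]
  have hsuq : star u * q = star u := by
    rw [hus, add_mul, hq, mul_assoc, hq, ← hus]
  have hqsu : q * star u = star u := by
    rw [hus, mul_add, hq]
    simp only [mul_assoc, hq']
  -- norm bounds
  have hnorm3 : ∀ z : B, ‖z‖ ≤ 1 → ‖q * z * q‖ ≤ 1 := by
    intro z hz
    have h1 : ‖q * z‖ ≤ 1 := by
      calc ‖q * z‖ ≤ ‖q‖ * ‖z‖ := norm_mul_le _ _
        _ ≤ 1 := by nlinarith [norm_nonneg q, norm_nonneg z]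
    calc ‖q * z * q‖ ≤ ‖q * z‖ * ‖q‖ := norm_mul_le _ _
      _ ≤ 1 := by nlinarith [norm_nonneg (q * z), norm_nonneg q]
  have h3 : star (q * c * q) * (q * c * q) ≤ 1 :=
    aux_le_one_of_norm_le_one (hnorm3 c hx)
  have h4 : star (q * d * q) * (q * d * q) ≤ 1 :=
    aux_le_one_of_norm_le_one (hnorm3 d hy)
  -- conjugate by q
  have hconj : ∀ z : B, star (q * z * q) * (q * z * q) ≤ 1 →
      star (q * z * q) * (q * z * q) ≤ q := by
    intro z hz
    have h := star_left_conjugate_le_conjugate hz q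
    rw [hqsa, mul_one, hq] at h
    have e : q * (star (q * z * q) * (q * z * q)) * q
        = star (q * z * q) * (q * z * q) := by
      simp only [star_mul, hqsa, mul_assoc, hq, hq']
    rwa [e] at h
  have H3 := hconj c h3
  have H4 := hconj d h4
  -- expand in terms of u
  have e3 : star (q * c * q) * (q * c * q) = star u * u - star u - u + q := by
    have hstar : star (q * c * q) = star u - q := by
      rw [hqcq, star_sub, hqsa]
    rw [hstar, hqcq, sub_mul, mul_sub, mul_sub, hq, hsuq, hqu]
    abel
  have e4 : star (q * d * q) * (q * d * q) = star u * u + star u + u + q := by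
    have hstar : star (q * d * q) = -q - star u := by
      rw [hqdq, star_sub, star_neg, hqsa]
    rw [hstar, hqdq]
    have e : (-q - star u) * (-q - u) = (q + star u) * (q + u) := by
      rw [show -q - star u = -(q + star u) by abel, show -q - u = -(q + u) by abel,
        neg_mul_neg]
    rw [e, add_mul, mul_add, mul_add, hq, hqu, hsuq]
    abel
  rw [e3] at H3
  rw [e4] at H4
  have P3 : star u * u ≤ star u + u := by
    have h' : star u * u - star u - u ≤ 0 := (add_le_iff_nonpos_left).mp H3
    rwa [sub_sub, sub_nonpos] at h'
  have P4 : star u * u + (star u + u) ≤ 0 := by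
    have h' : star u * u + star u + u ≤ 0 := (add_le_iff_nonpos_left).mp H4
    rwa [add_assoc] at h'
  have hA0 : (0 : B) ≤ star u * u := star_mul_self_nonneg u
  have hle0 : star u * u ≤ 0 := by
    calc star u * u = star u * u + 0 := (add_zero _).symm
      _ ≤ star u * u + star u * u := add_le_add_right hA0 _
      _ ≤ star u * u + (star u + u) := add_le_add_right P3 _
      _ ≤ 0 := P4
  have hu0 : u = 0 := (CStarRing.star_mul_self_eq_zero_iff u).mp (le_antisymm hle0 hA0)
  have hqcq' : q * c * q = -q := by rw [hqcq, hu0]; abel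
  have hcq : c * q = -q := aux_corner hq hqsa hx hqcq'
  -- conclude
  have h3' : (2:ℕ) • (x * q) = (2:ℕ) • q := by
    have e : (2:ℕ) • (x * q) = 1 * q - c * q := by
      rw [hcdef, sub_mul, one_mul, smul_mul_assoc]
      abel
    rw [e, hcq, one_mul, sub_neg_eq_add, two_smul]
  have h5' : ((2:ℕ) : ℂ) • (x * q) = ((2:ℕ) : ℂ) • q := by
    rw [Nat.cast_smul_eq_nsmul, Nat.cast_smul_eq_nsmul]; exact h3'
  exact smul_right_injective B (by norm_num : ((2:ℕ) : ℂ) ≠ 0) h5'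

end Aux

/-- Proposition 4.6 (faces): for projections `p, q` in a unital operator algebra `A ⊆ B`,
the set `[p,q]_A = {a ∈ A : ‖1 - 2a‖ ≤ 1, aq = q, ap = a}` is a face of
`(1/2)𝔉_A = {a ∈ A : ‖1 - 2a‖ ≤ 1}`. -/
theorem stmt10 {B : Type*} [NormedRing B] [StarRing B] [CStarRing B] [NormOneClass B]
    [NormedAlgebra ℂ B] [StarModule ℂ B] [CompleteSpace B]
    (A : Subalgebra ℂ B) (hA : IsClosed (A : Set B))
    (p q : B) (hp : IsIdempotentElem p) (hpsa : IsSelfAdjoint p) (hpA : p ∈ A)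
    (hq : IsIdempotentElem q) (hqsa : IsSelfAdjoint q) (hqA : q ∈ A)
    (x y : B) (hxA : x ∈ A) (hyA : y ∈ A)
    (hx : ‖(1 : B) - 2 • x‖ ≤ 1) (hy : ‖(1 : B) - 2 • y‖ ≤ 1)
    (hmidq : ((2 : ℂ)⁻¹ • (x + y)) * q = q)
    (hmidp : ((2 : ℂ)⁻¹ • (x + y)) * p = (2 : ℂ)⁻¹ • (x + y)) :
    (x * q = q ∧ x * p = x) ∧ (y * q = q ∧ y * p = y) := by
  letI : CStarAlgebra B :=
    { ‹NormedRing B›, ‹StarRing B›, ‹CStarRing B›, ‹NormedAlgebra ℂ B›,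
      ‹StarModule ℂ B›, ‹CompleteSpace B› with }
  letI : PartialOrder B := CStarAlgebra.spectralOrder B
  letI : StarOrderedRing B := CStarAlgebra.spectralOrderedRing B
  -- translate midpoint hypotheses
  have hq2 : (x + y) * q = 2 • q := by
    have h : (2:ℂ) • (((2:ℂ)⁻¹ • (x + y)) * q) = (2:ℂ) • q := by rw [hmidq]
    rw [smul_mul_assoc, smul_smul] at h
    norm_num at h
    rw [h, ← Nat.cast_smul_eq_nsmul ℂ 2 q]
    norm_num
  have hp2 : (x + y) * p = x + y := by
    have h : (2:ℂ) • (((2:ℂ)⁻¹ • (x + y)) * p) = (2:ℂ) • ((2:ℂ)⁻¹ • (x + y)) := by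
      rw [hmidp]
    rw [smul_mul_assoc, smul_smul, smul_smul] at h
    norm_num at h
    exact h
  -- the q conditions
  have hxq : x * q = q := aux_key hq hqsa.star_eq hx hy hq2
  have hyq : y * q = q := aux_key hq hqsa.star_eq hy hx (by rwa [add_comm] at hq2)
  -- the p conditions, via 1-x, 1-y, 1-p
  have h1p : ((1:B) - p) * ((1:B) - p) = 1 - p := hp.one_sub
  have h1psa : star ((1:B) - p) = 1 - p := by rw [star_sub, star_one, hpsa.star_eq]
  have hnorm : ∀ z : B, ‖(1:B) - 2 • z‖ ≤ 1 → ‖(1:B) - 2 • ((1:B) - z)‖ ≤ 1 := by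
    intro z hz
    have e : (1:B) - 2 • ((1:B) - z) = -((1:B) - 2 • z) := by
      rw [smul_sub]; abel
    rw [e, norm_neg]; exact hz
  have hmid' : (((1:B) - x) + ((1:B) - y)) * ((1:B) - p) = 2 • ((1:B) - p) := by
    have e : ((1:B) - x) + ((1:B) - y) = 2 • (1:B) - (x + y) := by
      rw [two_smul]; abel
    rw [e, sub_mul, smul_mul_assoc, one_mul, mul_sub, mul_one, hp2]
    abel
  have hx1p : ((1:B) - x) * ((1:B) - p) = 1 - p :=
    aux_key h1p h1psa (hnorm x hx) (hnorm y hy) hmid'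
  have hy1p : ((1:B) - y) * ((1:B) - p) = 1 - p :=
    aux_key h1p h1psa (hnorm y hy) (hnorm x hx) (by rwa [add_comm] at hmid')
  have hxp : x * p = x := by
    have e : ((1:B) - x) * ((1:B) - p) = 1 - p - x + x * p := by
      simp only [sub_mul, mul_sub, one_mul, mul_one]
      abel
    rw [e] at hx1p
    have e2 : x * p - x = (1 - p - x + x * p) - ((1:B) - p) := by abel
    rw [hx1p, sub_self] at e2
    exact sub_eq_zero.mp e2
  have hyp : y * p = y := by
    have e : ((1:B) - y) * ((1:B) - p) = 1 - p - y + y * p := by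
      simp only [sub_mul, mul_sub, one_mul, mul_one]
      abel
    rw [e] at hy1p
    have e2 : y * p - y = (1 - p - y + y * p) - ((1:B) - p) := by abel
    rw [hy1p, sub_self] at e2
    exact sub_eq_zero.mp e2
  exact ⟨⟨hxq, hxp⟩, ⟨hyq, hyp⟩⟩
end
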